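/- Let ω > 0, γ, D_qq, D_pq be real, D_pp > 0, Δ := D_pp D_qq − D_pq² − γ²/4 ≥ 0, and let V : ℝ → ℝ be continuous. Define on C_c^∞(ℝ,ℂ) the operator G u = −(D_qq + i/2) p² u − (D_pp + iω²/2) q² u + (D_pq − iγ/2)(pq + qp) u + (γ/2) u − i V(q) u, and the Lindblad operators L₁ = ((−2D_pq + iγ)/√(2D_pp)) p + √(2D_pp) q, L₂ = (2√Δ/√(2D_pp)) p. Then for every u ∈ C_c^∞(ℝ,ℂ): Re ⟨u, G u⟩ = −(1/2)( ‖L₁ u‖² + ‖L₂ u‖² ) ≤ 0, i.e. G is dissipative on C_c^∞(ℝ,ℂ). -/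

import Mathlib

open MeasureTheory Complex
open scoped ComplexOrder

noncomputable section

/-- Operators acting on complex-valued functions on `ℝ`. -/
abbrev Op : Type := (ℝ → ℂ) → (ℝ → ℂ)

/-- The momentum operator `(p u)(x) = -i u'(x)`. -/
def pOp : Op := fun u x => -Complex.I * deriv u x

/-- The position operator `(q u)(x) = x * u(x)`. -/
def qOp : Op := fun u x => (x : ℂ) * u x

/-- Multiplication operator by a real-valued function. -/
def mulOp (f : ℝ → ℝ) : Op := fun u x => (f x : ℂ) * u x

/-- Commutator of two operators. -/
def opComm (A B : Op) : Op := fun u => A (B u) - B (A u)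

/-- Anticommutator of two operators. -/
def opACom (A B : Op) : Op := fun u => A (B u) + B (A u)

/-- The `L²(ℝ,ℂ)` inner product, antilinear in the first argument. -/
def ip (u v : ℝ → ℂ) : ℂ := ∫ x : ℝ, (starRingEnd ℂ) (u x) * v x

/-- `u ∈ C_c^∞(ℝ,ℂ)`: smooth and compactly supported. -/
def IsTest (u : ℝ → ℂ) : Prop := ContDiff ℝ (⊤ : ℕ∞) u ∧ HasCompactSupport u

/-- The first Lindblad operator `L₁ = ((−2D_pq + iγ)/√(2D_pp)) p + √(2D_pp) q`. -/
def L1op (γ Dpp Dpq : ℝ) : Op :=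
  ((((-2*Dpq : ℝ) : ℂ) + Complex.I * (γ : ℂ)) / ((Real.sqrt (2*Dpp) : ℝ) : ℂ)) • pOp
  + ((Real.sqrt (2*Dpp) : ℝ) : ℂ) • qOp

/-- The second Lindblad operator `L₂ = (2√Δ/√(2D_pp)) p`, `Δ = D_pp D_qq − D_pq² − γ²/4`. -/
def L2op (γ Dpp Dqq Dpq : ℝ) : Op :=
  ((2 * Real.sqrt (Dpp*Dqq - Dpq^2 - γ^2/4) / Real.sqrt (2*Dpp) : ℝ) : ℂ) • pOp

/-- `G u = −(D_qq + i/2) p² u − (D_pp + iω²/2) q² u + (D_pq − iγ/2)(pq+qp) u + (γ/2) u − i V(q) u`. -/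
def Gop (ω γ Dpp Dqq Dpq : ℝ) (V : ℝ → ℝ) : Op := fun u =>
  (-((Dqq : ℂ) + Complex.I/2)) • pOp (pOp u)
  - ((Dpp : ℂ) + Complex.I * ((ω^2 : ℝ) : ℂ)/2) • qOp (qOp u)
  + ((Dpq : ℂ) - Complex.I * (γ : ℂ)/2) • opACom pOp qOp u
  + ((γ/2 : ℝ) : ℂ) • u
  - Complex.I • mulOp V u

/-! ### Auxiliary lemmas -/

lemma isTest_pOp {u} (hu : IsTest u) : IsTest (pOp u) := by
  obtain ⟨h1, h2⟩ := hu
  exact ⟨contDiff_const.mul (contDiff_infty_iff_deriv.mp h1).2, h2.deriv.mul_left⟩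

lemma isTest_qOp {u} (hu : IsTest u) : IsTest (qOp u) := by
  obtain ⟨h1, h2⟩ := hu
  exact ⟨Complex.ofRealCLM.contDiff.mul h1, h2.mul_left⟩

/-- Integrability of the products appearing in the inner products. -/
def IpInt (u f : ℝ → ℂ) : Prop := Integrable (fun x => (starRingEnd ℂ) (u x) * f x)

lemma ipInt_of_ccs {u f : ℝ → ℂ} (hu : Continuous u) (hf : Continuous f)
    (hsf : HasCompactSupport f) : IpInt u f :=
  ((Complex.continuous_conj.comp hu).mul hf).integrable_of_hasCompactSupport hsf.mul_left

lemma IpInt.smul {u f : ℝ → ℂ} (h : IpInt u f) (c : ℂ) : IpInt u (c • f) := by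
  have := h.const_mul c
  unfold IpInt
  simpa [Pi.smul_apply, smul_eq_mul, mul_left_comm] using this

lemma IpInt.add {u f g : ℝ → ℂ} (hf : IpInt u f) (hg : IpInt u g) : IpInt u (f + g) := by
  have := Integrable.add hf hg
  unfold IpInt
  simpa [Pi.add_def, mul_add] using this

lemma IpInt.sub {u f g : ℝ → ℂ} (hf : IpInt u f) (hg : IpInt u g) : IpInt u (f - g) := by
  have := Integrable.sub hf hg
  unfold IpInt
  simpa [Pi.sub_def, mul_sub] using this

lemma IpInt.smul_left {u f : ℝ → ℂ} (h : IpInt u f) (c : ℂ) : IpInt (c • u) f := by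
  have := h.const_mul ((starRingEnd ℂ) c)
  unfold IpInt
  simpa [Pi.smul_apply, smul_eq_mul, map_mul, mul_assoc] using this

lemma ip_add_right {u f g : ℝ → ℂ} (h1 : IpInt u f) (h2 : IpInt u g) :
    ip u (f + g) = ip u f + ip u g := by
  simp only [ip, Pi.add_apply, mul_add]
  exact integral_add h1 h2

lemma ip_sub_right {u f g : ℝ → ℂ} (h1 : IpInt u f) (h2 : IpInt u g) :
    ip u (f - g) = ip u f - ip u g := by
  simp only [ip, Pi.sub_apply, mul_sub]
  exact integral_sub h1 h2

lemma ip_smul_right (u : ℝ → ℂ) (c : ℂ) (f : ℝ → ℂ) : ip u (c • f) = c * ip u f := by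
  simp only [ip, Pi.smul_apply, smul_eq_mul]
  rw [← integral_const_mul]
  congr 1; funext x; ring

lemma ip_smul_left (u : ℝ → ℂ) (c : ℂ) (f : ℝ → ℂ) :
    ip (c • u) f = (starRingEnd ℂ) c * ip u f := by
  simp only [ip, Pi.smul_apply, smul_eq_mul, map_mul]
  rw [← integral_const_mul]
  congr 1; funext x; ring

lemma ip_add_left {u v f : ℝ → ℂ} (h1 : IpInt u f) (h2 : IpInt v f) :
    ip (u + v) f = ip u f + ip v f := by
  simp only [ip, Pi.add_apply, map_add, add_mul]
  exact integral_add h1 h2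

lemma ip_conj_symm (u v : ℝ → ℂ) : ip v u = (starRingEnd ℂ) (ip u v) := by
  rw [ip, ip, ← integral_conj]
  congr 1; funext x; simp [mul_comm]

lemma ip_self_eq_re (u : ℝ → ℂ) : ip u u = (((ip u u).re : ℝ) : ℂ) ∧ 0 ≤ (ip u u).re := by
  have h : ip u u = ((∫ x, Complex.normSq (u x) : ℝ) : ℂ) := by
    have h2 : ip u u = ∫ x, ((Complex.normSq (u x) : ℝ) : ℂ) := by
      rw [ip]; congr 1; funext x; rw [Complex.normSq_eq_conj_mul_self]
    rw [h2]; exact integral_ofReal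
  constructor
  · rw [h]; simp
  · rw [h]; simp only [Complex.ofReal_re]
    exact integral_nonneg fun x => Complex.normSq_nonneg _

lemma ibp {u v : ℝ → ℂ} (hu : IsTest u) (hv : IsTest v) :
    ∫ x, (starRingEnd ℂ) (u x) * deriv v x = - ∫ x, (starRingEnd ℂ) (deriv u x) * v x := by
  have hud : Differentiable ℝ u := hu.1.differentiable (by norm_num)
  have hvd : Differentiable ℝ v := hv.1.differentiable (by norm_num)
  have hu' : Continuous (deriv u) := (contDiff_infty_iff_deriv.mp hu.1).2.continuous
  have hv' : Continuous (deriv v) := (contDiff_infty_iff_deriv.mp hv.1).2.continuous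
  have key := integral_mul_deriv_eq_deriv_mul_of_integrable
    (u := fun x => (starRingEnd ℂ) (u x)) (u' := fun x => (starRingEnd ℂ) (deriv u x))
    (v := v) (v' := deriv v)
    (fun x _ => ((hud x).hasDerivAt).star)
    (fun x _ => (hvd x).hasDerivAt)
    ?_ ?_ ?_
  · simpa [Pi.mul_def] using key
  · simpa [Pi.mul_def, IpInt] using ipInt_of_ccs hu.1.continuous hv' hv.2.deriv
  · simpa [Pi.mul_def] using
      ((Complex.continuous_conj.comp hu').mul hv.1.continuous).integrable_of_hasCompactSupport
        hv.2.mul_left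
  · simpa [Pi.mul_def, IpInt] using ipInt_of_ccs hu.1.continuous hv.1.continuous hv.2

lemma ip_pOp_symm {u v : ℝ → ℂ} (hu : IsTest u) (hv : IsTest v) :
    ip u (pOp v) = ip (pOp u) v := by
  unfold ip pOp
  calc ∫ x, (starRingEnd ℂ) (u x) * (-Complex.I * deriv v x)
      = -Complex.I * ∫ x, (starRingEnd ℂ) (u x) * deriv v x := by
        rw [← integral_const_mul]; congr 1; funext x; ring
    _ = -Complex.I * (- ∫ x, (starRingEnd ℂ) (deriv u x) * v x) := by rw [ibp hu hv]
    _ = Complex.I * ∫ x, (starRingEnd ℂ) (deriv u x) * v x := by ring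
    _ = ∫ x, (starRingEnd ℂ) (-Complex.I * deriv u x) * v x := by
        rw [← integral_const_mul]; congr 1; funext x
        simp [map_mul, Complex.conj_I]; ring

lemma ip_qOp_symm (u v : ℝ → ℂ) : ip u (qOp v) = ip (qOp u) v := by
  unfold ip qOp
  congr 1; funext x
  simp [map_mul, Complex.conj_ofReal]; ring

lemma comm_pt {u : ℝ → ℂ} (hu : IsTest u) (x : ℝ) :
    pOp (qOp u) x - qOp (pOp u) x = -Complex.I * u x := by
  have hud : Differentiable ℝ u := hu.1.differentiable (by norm_num)
  have hq : HasDerivAt (fun y : ℝ => (y : ℂ) * u y) ((1 : ℂ) * u x + (x : ℂ) * deriv u x) x := by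
    have h1 : HasDerivAt (fun y : ℝ => (y : ℂ)) 1 x := by
      simpa using (hasDerivAt_id x).ofReal_comp
    exact h1.mul (hud x).hasDerivAt
  simp only [pOp, qOp]
  rw [show qOp u = (fun y : ℝ => (y:ℂ) * u y) from rfl, hq.deriv]
  ring

set_option maxHeartbeats 1000000 in
/-- `Re ⟨u, G u⟩ = −(1/2)(‖L₁u‖² + ‖L₂u‖²) ≤ 0`, i.e. `G` is dissipative
on `C_c^∞(ℝ,ℂ)`. -/
theorem G_dissipative (ω γ Dpp Dqq Dpq : ℝ) (hω : 0 < ω) (hpp : 0 < Dpp)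
    (hΔ : 0 ≤ Dpp*Dqq - Dpq^2 - γ^2/4) (V : ℝ → ℝ) (hV : Continuous V)
    (u : ℝ → ℂ) (hu : IsTest u) :
    (ip u (Gop ω γ Dpp Dqq Dpq V u)).re
      = -(1/2) * ((ip (L1op γ Dpp Dpq u) (L1op γ Dpp Dpq u)).re
          + (ip (L2op γ Dpp Dqq Dpq u) (L2op γ Dpp Dqq Dpq u)).re)
    ∧ (ip u (Gop ω γ Dpp Dqq Dpq V u)).re ≤ 0 := by
  have tp := isTest_pOp hu
  have tq := isTest_qOp hu
  have tpp := isTest_pOp tp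
  have tqq := isTest_qOp tq
  have tpq := isTest_pOp tq
  have tqp := isTest_qOp tp
  have J : ∀ {f g : ℝ → ℂ}, IsTest f → IsTest g → IpInt f g :=
    fun hf hg => ipInt_of_ccs hf.1.continuous hg.1.continuous hg.2
  obtain ⟨p, hP, hp0⟩ : ∃ p : ℝ, ip (pOp u) (pOp u) = (p:ℂ) ∧ 0 ≤ p :=
    ⟨_, (ip_self_eq_re _).1, (ip_self_eq_re _).2⟩
  obtain ⟨q, hQ, hq0⟩ : ∃ q : ℝ, ip (qOp u) (qOp u) = (q:ℂ) ∧ 0 ≤ q :=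
    ⟨_, (ip_self_eq_re _).1, (ip_self_eq_re _).2⟩
  obtain ⟨n, hN, hn0⟩ : ∃ n : ℝ, ip u u = (n:ℂ) ∧ 0 ≤ n :=
    ⟨_, (ip_self_eq_re _).1, (ip_self_eq_re _).2⟩
  have hCq : ip u (pOp (qOp u)) = ip (pOp u) (qOp u) := ip_pOp_symm hu tq
  have hCqp : ip u (qOp (pOp u)) = (starRingEnd ℂ) (ip (pOp u) (qOp u)) := by
    rw [ip_qOp_symm u (pOp u), ip_conj_symm]
  obtain ⟨cr, hC⟩ : ∃ cr : ℝ, ip (pOp u) (qOp u) = (cr:ℂ) - ((n/2:ℝ):ℂ) * Complex.I := by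
    refine ⟨(ip (pOp u) (qOp u)).re, ?_⟩
    have hcomm : ip u (pOp (qOp u)) - ip u (qOp (pOp u)) = -Complex.I * (n:ℂ) := by
      rw [← ip_sub_right (J hu tpq) (J hu tqp)]
      have e : pOp (qOp u) - qOp (pOp u) = (-Complex.I) • u := by
        funext x; simpa [Pi.sub_apply, Pi.smul_apply, smul_eq_mul] using comm_pt hu x
      rw [e, ip_smul_right, hN]
    rw [hCq, hCqp] at hcomm
    have him := congrArg Complex.im hcomm
    simp [Complex.sub_im, Complex.conj_im, Complex.mul_im] at him
    apply Complex.ext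
    · simp
    · simp; linarith
  have hconjC : (starRingEnd ℂ) (ip (pOp u) (qOp u)) = (cr:ℂ) + ((n/2:ℝ):ℂ) * Complex.I := by
    rw [hC]; simp [map_sub, map_mul, Complex.conj_ofReal, Complex.conj_I, map_ofNat]
  obtain ⟨w, hW⟩ : ∃ w : ℝ, ip u (mulOp V u) = (w:ℂ) := by
    refine ⟨∫ x, V x * Complex.normSq (u x), ?_⟩
    have h2 : ip u (mulOp V u) = ∫ x, ((V x * Complex.normSq (u x) : ℝ) : ℂ) := by
      unfold ip mulOp
      congr 1; funext x
      push_cast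
      rw [← Complex.mul_conj]
      ring
    rw [h2]; exact integral_ofReal
  have iV : IpInt u (mulOp V u) := ipInt_of_ccs hu.1.continuous
    ((Complex.continuous_ofReal.comp hV).mul hu.1.continuous) hu.2.mul_left
  -- expansion of ⟨u, Gu⟩
  have hG : ip u (Gop ω γ Dpp Dqq Dpq V u)
      = (-((Dqq:ℂ) + Complex.I/2)) * (p:ℂ)
        - ((Dpp:ℂ) + Complex.I * ((ω^2:ℝ):ℂ)/2) * (q:ℂ)
        + ((Dpq:ℂ) - Complex.I * (γ:ℂ)/2)
            * (((cr:ℂ) - ((n/2:ℝ):ℂ) * Complex.I) + ((cr:ℂ) + ((n/2:ℝ):ℂ) * Complex.I))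
        + ((γ/2:ℝ):ℂ) * (n:ℂ)
        - Complex.I * (w:ℂ) := by
    have i1 : IpInt u ((-((Dqq:ℂ) + Complex.I/2)) • pOp (pOp u)) := (J hu tpp).smul _
    have i2 : IpInt u (((Dpp:ℂ) + Complex.I * ((ω^2:ℝ):ℂ)/2) • qOp (qOp u)) := (J hu tqq).smul _
    have i3 : IpInt u (((Dpq:ℂ) - Complex.I * (γ:ℂ)/2) • opACom pOp qOp u) :=
      (show IpInt u (opACom pOp qOp u) from (J hu tpq).add (J hu tqp)).smul _
    have i4 : IpInt u (((γ/2:ℝ):ℂ) • u) := (J hu hu).smul _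
    have i5 : IpInt u (Complex.I • mulOp V u) := iV.smul _
    unfold Gop
    rw [ip_sub_right (((i1.sub i2).add i3).add i4) i5,
        ip_add_right ((i1.sub i2).add i3) i4,
        ip_add_right (i1.sub i2) i3,
        ip_sub_right i1 i2,
        ip_smul_right, ip_smul_right, ip_smul_right, ip_smul_right, ip_smul_right,
        ip_pOp_symm hu tp, ip_qOp_symm u (qOp u), hP, hQ, hN, hW,
        show opACom pOp qOp u = pOp (qOp u) + qOp (pOp u) from rfl,
        ip_add_right (J hu tpq) (J hu tqp), hCq, hCqp, hconjC, hC]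
  have hG2 : ip u (Gop ω γ Dpp Dqq Dpq V u)
      = (((-Dqq)*p - Dpp*q + 2*Dpq*cr + γ/2*n : ℝ):ℂ)
        + ((-(p/2) - ω^2*q/2 - γ*cr - w : ℝ):ℂ) * Complex.I := by
    rw [hG]; push_cast; ring
  -- Lindblad terms
  have hs0 : 0 < Real.sqrt (2*Dpp) := Real.sqrt_pos.mpr (by linarith)
  have hs2 : Real.sqrt (2*Dpp) ^ 2 = 2*Dpp := Real.sq_sqrt (by linarith)
  have ht2 : Real.sqrt (Dpp*Dqq - Dpq^2 - γ^2/4) ^ 2 = Dpp*Dqq - Dpq^2 - γ^2/4 := Real.sq_sqrt hΔ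
  have hsC : ((Real.sqrt (2*Dpp) : ℝ):ℂ) ≠ 0 := Complex.ofReal_ne_zero.mpr hs0.ne'
  have k1 : IpInt (pOp u)
      (((((-2*Dpq : ℝ) : ℂ) + Complex.I * (γ : ℂ)) / ((Real.sqrt (2*Dpp) : ℝ) : ℂ)) • pOp u
        + ((Real.sqrt (2*Dpp) : ℝ) : ℂ) • qOp u) :=
    ((J tp tp).smul _).add ((J tp tq).smul _)
  have k2 : IpInt (qOp u)
      (((((-2*Dpq : ℝ) : ℂ) + Complex.I * (γ : ℂ)) / ((Real.sqrt (2*Dpp) : ℝ) : ℂ)) • pOp u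
        + ((Real.sqrt (2*Dpp) : ℝ) : ℂ) • qOp u) :=
    ((J tq tp).smul _).add ((J tq tq).smul _)
  have hqp' : ip (qOp u) (pOp u) = (starRingEnd ℂ) (ip (pOp u) (qOp u)) := ip_conj_symm _ _
  have hL1 : ip (L1op γ Dpp Dpq u) (L1op γ Dpp Dpq u)
      = (starRingEnd ℂ) ((((-2*Dpq : ℝ) : ℂ) + Complex.I * (γ : ℂ)) / ((Real.sqrt (2*Dpp) : ℝ) : ℂ))
          * (((((-2*Dpq : ℝ) : ℂ) + Complex.I * (γ : ℂ)) / ((Real.sqrt (2*Dpp) : ℝ) : ℂ)) * (p:ℂ)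
             + ((Real.sqrt (2*Dpp) : ℝ) : ℂ) * ((cr:ℂ) - ((n/2:ℝ):ℂ) * Complex.I))
        + ((Real.sqrt (2*Dpp) : ℝ) : ℂ)
          * (((((-2*Dpq : ℝ) : ℂ) + Complex.I * (γ : ℂ)) / ((Real.sqrt (2*Dpp) : ℝ) : ℂ))
              * ((cr:ℂ) + ((n/2:ℝ):ℂ) * Complex.I)
             + ((Real.sqrt (2*Dpp) : ℝ) : ℂ) * (q:ℂ)) := by
    rw [show L1op γ Dpp Dpq u
          = ((((-2*Dpq : ℝ) : ℂ) + Complex.I * (γ : ℂ)) / ((Real.sqrt (2*Dpp) : ℝ) : ℂ)) • pOp u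
            + ((Real.sqrt (2*Dpp) : ℝ) : ℂ) • qOp u from rfl,
        ip_add_left (k1.smul_left _) (k2.smul_left _),
        ip_smul_left, ip_smul_left,
        ip_add_right ((J tp tp).smul _) ((J tp tq).smul _),
        ip_add_right ((J tq tp).smul _) ((J tq tq).smul _),
        ip_smul_right, ip_smul_right, ip_smul_right, ip_smul_right,
        hP, hQ, hqp', hconjC, hC, Complex.conj_ofReal]
  have hL12 : ip (L1op γ Dpp Dpq u) (L1op γ Dpp Dpq u)
      = (((4*Dpq^2+γ^2)/(Real.sqrt (2*Dpp))^2*p - 4*Dpq*cr - γ*n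
          + (Real.sqrt (2*Dpp))^2*q : ℝ):ℂ) := by
    rw [hL1]
    rw [map_div₀, map_add, map_mul, Complex.conj_I, Complex.conj_ofReal, Complex.conj_ofReal]
    simp only [Complex.conj_ofReal]
    push_cast
    field_simp
    ring_nf
    simp only [Complex.I_sq]
    ring
  have hL22 : ip (L2op γ Dpp Dqq Dpq u) (L2op γ Dpp Dqq Dpq u)
      = ((4*(Real.sqrt (Dpp*Dqq - Dpq^2 - γ^2/4))^2/(Real.sqrt (2*Dpp))^2*p : ℝ):ℂ) := by
    rw [show L2op γ Dpp Dqq Dpq u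
          = ((2 * Real.sqrt (Dpp*Dqq - Dpq^2 - γ^2/4) / Real.sqrt (2*Dpp) : ℝ) : ℂ) • pOp u
          from rfl,
        ip_smul_left, ip_smul_right, hP, Complex.conj_ofReal]
    push_cast
    field_simp
    ring
  have hre1 : (ip u (Gop ω γ Dpp Dqq Dpq V u)).re = (-Dqq)*p - Dpp*q + 2*Dpq*cr + γ/2*n := by
    rw [hG2]
    simp only [Complex.add_re, Complex.mul_re, Complex.ofReal_re, Complex.ofReal_im,
      Complex.I_re, Complex.I_im]
    ring
  have hre2 : (ip (L1op γ Dpp Dpq u) (L1op γ Dpp Dpq u)).re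
      = (4*Dpq^2+γ^2)/(Real.sqrt (2*Dpp))^2*p - 4*Dpq*cr - γ*n + (Real.sqrt (2*Dpp))^2*q := by
    rw [hL12]; exact Complex.ofReal_re _
  have hre3 : (ip (L2op γ Dpp Dqq Dpq u) (L2op γ Dpp Dqq Dpq u)).re
      = 4*(Real.sqrt (Dpp*Dqq - Dpq^2 - γ^2/4))^2/(Real.sqrt (2*Dpp))^2*p := by
    rw [hL22]; exact Complex.ofReal_re _
  have hkey : (ip u (Gop ω γ Dpp Dqq Dpq V u)).re
      = -(1/2) * ((ip (L1op γ Dpp Dpq u) (L1op γ Dpp Dpq u)).re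
          + (ip (L2op γ Dpp Dqq Dpq u) (L2op γ Dpp Dqq Dpq u)).re) := by
    rw [hre1, hre2, hre3, hs2, ht2]
    field_simp
    ring
  refine ⟨hkey, ?_⟩
  rw [hkey]
  have n1 := (ip_self_eq_re (L1op γ Dpp Dpq u)).2
  have n2 := (ip_self_eq_re (L2op γ Dpp Dqq Dpq u)).2
  nlinarith
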